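/- Let d ≥ 2 and n ≥ 2 be integers, let v ∈ ℤ^d have every entry coprime to n, and let δ ∈ ℤ^d. Then for every pair of coordinates 1 ≤ k < l ≤ d, the bivariate projection of L(n,v,δ) has equal Euclidean and wrap-around separation distances: min_{x,y ∈ L(n,v,δ), x ≠ y} ‖π_{k,l}(x) − π_{k,l}(y)‖ = min_{x,y ∈ L(n,v,δ), x ≠ y} w(π_{k,l}(x) − π_{k,l}(y)), where π_{k,l}(u) = (u_k, u_l) and ‖·‖ is the Euclidean norm on ℝ². Consequently, the bivariate wrap-around criterion c_WS2(L(n,v,δ)) = Σ_{1≤k<l≤d} [min_{x≠y} w(π_{k,l}(x)−π_{k,l}(y))]^{−1} equals the bivariate Euclidean criterion c_RS2(L(n,v,δ)) = Σ_{1≤k<l≤d} [min_{x≠y} ‖π_{k,l}(x)−π_{k,l}(y)‖]^{−1}. -/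

import Mathlib

open Finset

/-- Distance from a real number to the nearest integer: w(t) = min over z in ZZ of |t - z|. -/
noncomputable def nid (t : ℝ) : ℝ := ⨅ z : ℤ, |t - (z : ℝ)|

/-- Wrap-around distance on ℝ^d. -/
noncomputable def wdist {d : ℕ} (u : Fin d → ℝ) : ℝ := Real.sqrt (∑ k, nid (u k) ^ 2)

/-- Lattice-based Latin hypercube design
L(n,v,δ) = { z + i·v/n + δ/n + 1_d/(2n) : z ∈ ℤ^d, i ∈ ℤ } ∩ [0,1]^d. -/
def LHDset (d n : ℕ) (v : Fin d → ℤ) (δ : Fin d → ℝ) : Set (Fin d → ℝ) :=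
  {x | (∃ (z : Fin d → ℤ) (i : ℤ),
          x = fun k => (z k : ℝ) + (i : ℝ) * (v k : ℝ) / n + δ k / n + 1 / (2 * n)) ∧
       ∀ k, x k ∈ Set.Icc (0 : ℝ) 1}

/-! ### Auxiliary lemmas about `nid` -/

lemma nid_bdd (t : ℝ) : BddBelow (Set.range fun z : ℤ => |t - (z : ℝ)|) :=
  ⟨0, by rintro r ⟨z, rfl⟩; exact abs_nonneg _⟩

lemma nid_nonneg (t : ℝ) : 0 ≤ nid t := le_ciInf fun _ => abs_nonneg _

lemma nid_le (t : ℝ) (z : ℤ) : nid t ≤ |t - (z : ℝ)| := ciInf_le (nid_bdd t) z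

lemma nid_le_abs (t : ℝ) : nid t ≤ |t| := by simpa using nid_le t 0

lemma nid_neg_le (t : ℝ) : nid (-t) ≤ nid t :=
  le_ciInf fun z => by
    have h := nid_le (-t) (-z)
    rw [show (-t - ((-z : ℤ) : ℝ)) = -(t - z) by push_cast; ring, abs_neg] at h
    exact h

lemma nid_neg (t : ℝ) : nid (-t) = nid t :=
  le_antisymm (nid_neg_le t) (by simpa using nid_neg_le (-t))

lemma nid_unit (t : ℝ) (h0 : 0 ≤ t) (h1 : t ≤ 1) : nid t = min t (1 - t) := by
  refine le_antisymm (le_min ?_ ?_) (le_ciInf fun z => ?_)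
  · have := nid_le t 0; rwa [Int.cast_zero, sub_zero, abs_of_nonneg h0] at this
  · have := nid_le t 1; rwa [Int.cast_one, abs_sub_comm, abs_of_nonneg (by linarith)] at this
  · rcases le_or_gt (z : ℝ) 0 with h | h
    · calc min t (1 - t) ≤ t := min_le_left _ _
        _ ≤ |t - z| := by rw [abs_of_nonneg (by linarith)]; linarith
    · have hz0 : (0 : ℤ) < z := by exact_mod_cast h
      have hz : (1 : ℝ) ≤ (z : ℝ) := by exact_mod_cast hz0
      calc min t (1 - t) ≤ 1 - t := min_le_right _ _
        _ ≤ |t - z| := by rw [abs_sub_comm, abs_of_nonneg (by linarith)]; linarith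

lemma nid_int_div_nonneg (n : ℕ) (hn : 0 < n) (b : ℤ) (hb0 : 0 ≤ b) (hb : b ≤ n) :
    nid ((b : ℝ) / n) = min (b : ℝ) ((n : ℝ) - b) / n := by
  have hn' : (0 : ℝ) < n := by exact_mod_cast hn
  have hb0' : (0:ℝ) ≤ b := by exact_mod_cast hb0
  have hbn : (b:ℝ) ≤ n := by exact_mod_cast hb
  have h0 : (0:ℝ) ≤ (b:ℝ)/n := by positivity
  have h1 : (b:ℝ)/n ≤ 1 := by rw [div_le_one hn']; exact hbn
  rw [nid_unit _ h0 h1, show (1 : ℝ) - b/n = ((n:ℝ) - b)/n by field_simp,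
    div_eq_mul_inv (b:ℝ), div_eq_mul_inv ((n:ℝ) - b), div_eq_mul_inv (min _ _),
    ← min_mul_of_nonneg _ _ (by positivity : (0:ℝ) ≤ ((n:ℝ))⁻¹)]

lemma nid_int_div (n : ℕ) (hn : 0 < n) (b : ℤ) (hb : |b| ≤ n) :
    nid ((b : ℝ) / n) = min |(b:ℝ)| ((n : ℝ) - |(b:ℝ)|) / n := by
  rcases le_or_gt 0 b with h | h
  · rw [abs_of_nonneg (by exact_mod_cast h : (0:ℝ) ≤ (b:ℝ))]
    exact nid_int_div_nonneg n hn b h (by rwa [abs_of_nonneg h] at hb)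
  · have h1 : (b:ℝ)/n = -(((-b : ℤ):ℝ)/n) := by push_cast; ring
    have h2 : |(b:ℝ)| = ((-b : ℤ):ℝ) := by
      rw [abs_of_neg (by exact_mod_cast h : (b:ℝ) < 0)]; push_cast; ring
    rw [h1, nid_neg, h2]
    exact nid_int_div_nonneg n hn (-b) (by omega) (by rwa [abs_of_neg h] at hb)

/-! ### Counting lemmas in `ZMod n` -/

lemma card_val_filter (n : ℕ) [NeZero n] (P : ℕ → Prop) [DecidablePred P] :
    (univ.filter fun a : ZMod n => P a.val).card = ((Finset.range n).filter P).card := by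
  refine Finset.card_bij (fun a _ => a.val) ?_ ?_ ?_
  · intro a ha
    simp only [Finset.mem_filter, Finset.mem_range, Finset.mem_univ, true_and] at ha ⊢
    exact ⟨ZMod.val_lt a, ha⟩
  · intro a _ b _ h
    exact ZMod.val_injective n h
  · intro x hx
    simp only [Finset.mem_filter, Finset.mem_range, Finset.mem_univ, true_and] at hx
    exact ⟨(x : ZMod n), by simp [Finset.mem_filter, ZMod.val_cast_of_lt hx.1, hx.2],
      ZMod.val_cast_of_lt hx.1⟩

lemma card_ge_filter (n t : ℕ) [NeZero n] :
    (univ.filter fun a : ZMod n => t ≤ a.val).card = n - t := by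
  rw [card_val_filter n (fun x => t ≤ x)]
  rw [show (Finset.range n).filter (fun x => t ≤ x) = Finset.Ico t n by
    ext x; simp [Finset.mem_range, Finset.mem_Ico]; omega]
  simp [Nat.card_Ico]

lemma card_lt_filter (n t : ℕ) [NeZero n] (ht : t ≤ n) :
    (univ.filter fun a : ZMod n => a.val < t).card = t := by
  rw [card_val_filter n (fun x => x < t)]
  rw [show (Finset.range n).filter (fun x => x < t) = Finset.range t by
    ext x; simp [Finset.mem_range]; omega]
  simp

lemma card_comp_bij {α : Type*} [Fintype α] [DecidableEq α] (g : α → α) (hg : Function.Bijective g)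
    (P : α → Prop) [DecidablePred P] :
    (univ.filter fun a => P (g a)).card = (univ.filter P).card := by
  refine Finset.card_bij (fun a _ => g a) ?_ ?_ ?_
  · intro a ha; simp only [Finset.mem_filter, Finset.mem_univ, true_and] at ha ⊢; exact ha
  · intro a _ b _ h; exact hg.1 h
  · intro b hb
    simp only [Finset.mem_filter, Finset.mem_univ, true_and] at hb ⊢
    obtain ⟨a, rfl⟩ := hg.2 b; exact ⟨a, hb, rfl⟩

lemma bij_aux (n : ℕ) [NeZero n] (u : ZMod n) (hu : IsUnit u) (c : ZMod n) :
    Function.Bijective (fun m : ZMod n => m * u + c) := by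
  obtain ⟨w, rfl⟩ := hu
  rw [Function.bijective_iff_has_inverse]
  refine ⟨fun m => (m - c) * ↑w⁻¹, fun m => by simp, fun m => by simp⟩

lemma unit_aux (n : ℕ) [NeZero n] (x : ℤ) (h : IsCoprime x (n:ℤ)) : IsUnit ((x : ZMod n)) := by
  have := h.map (Int.castRingHom (ZMod n))
  simp only [map_natCast, Int.coe_castRingHom, map_intCast] at this
  rw [ZMod.natCast_self] at this
  exact isCoprime_zero_right.mp this

/-! ### The design as the range of an explicit map -/

def lA (n : ℕ) [NeZero n] {d : ℕ} (v δ : Fin d → ℤ) (m : ZMod n) (k : Fin d) : ℕ :=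
  (m * ((v k : ℤ) : ZMod n) + ((δ k : ℤ) : ZMod n)).val

noncomputable def lq (n : ℕ) [NeZero n] {d : ℕ} (v δ : Fin d → ℤ) (m : ZMod n) :
    Fin d → ℝ := fun k => (lA n v δ m k : ℝ) / n + 1 / (2 * n)

lemma lA_lt (n : ℕ) [NeZero n] {d : ℕ} (v δ : Fin d → ℤ) (m : ZMod n) (k : Fin d) :
    lA n v δ m k < n := ZMod.val_lt _

lemma lA_cast (n : ℕ) [NeZero n] {d : ℕ} (v δ : Fin d → ℤ) (m : ZMod n) (k : Fin d) :
    ((lA n v δ m k : ℕ) : ZMod n) = m * ((v k : ℤ) : ZMod n) + ((δ k : ℤ) : ZMod n) := by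
  simp [lA, ZMod.natCast_val, ZMod.cast_id]

lemma lhd_S_eq (d n : ℕ) [NeZero n] (v δ : Fin d → ℤ) :
    LHDset d n v (fun k => (δ k : ℝ)) = Set.range (lq n v δ) := by
  have hn : 0 < n := Nat.pos_of_ne_zero (NeZero.ne n)
  have hn' : (0 : ℝ) < n := by exact_mod_cast hn
  ext x
  constructor
  · rintro ⟨⟨z, i, rfl⟩, hb⟩
    refine ⟨(i : ZMod n), ?_⟩
    funext k
    have hbk := hb k
    simp only [Set.mem_Icc] at hbk
    obtain ⟨hb0, hb1⟩ := hbk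
    have hx : (z k : ℝ) + (i : ℝ) * (v k : ℝ) / n + (δ k : ℝ) / n + 1 / (2 * n)
        = ((n * z k + i * v k + δ k : ℤ) : ℝ) / n + 1 / (2 * n) := by
      push_cast; field_simp
    set M : ℤ := n * z k + i * v k + δ k with hM
    rw [hx] at hb0 hb1
    have hM0 : 0 ≤ M := by
      by_contra hc
      push_neg at hc
      have h1 : (M : ℝ) ≤ -1 := by
        have : M ≤ -1 := by omega
        exact_mod_cast this
      have h2 : (M : ℝ) / n ≤ -1 / n := by gcongr
      have h3 : -1 / (n:ℝ) + 1 / (2 * n) < 0 := by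
        rw [div_add_div _ _ (by positivity) (by positivity)]
        apply div_neg_of_neg_of_pos <;> nlinarith
      linarith
    have hMn : M < n := by
      by_contra hc
      push_neg at hc
      have h1 : (n : ℝ) ≤ (M : ℝ) := by exact_mod_cast hc
      have h2 : (1:ℝ) ≤ (M:ℝ)/n := by rw [le_div_iff₀ hn']; linarith
      have h3 : (0:ℝ) < 1 / (2*n) := by positivity
      linarith
    have hcast : ((M : ℤ) : ZMod n) = (i : ZMod n) * ((v k : ℤ) : ZMod n) + ((δ k : ℤ) : ZMod n) := by
      rw [hM]; push_cast; simp [ZMod.natCast_self]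
    have hval : ((lA n v δ (i : ZMod n) k : ℕ) : ℤ) = M := by
      unfold lA
      rw [← hcast, ZMod.val_intCast, Int.emod_eq_of_lt hM0 (by exact_mod_cast hMn)]
    have hvalR : ((lA n v δ (i : ZMod n) k : ℕ) : ℝ) = (M : ℝ) := by exact_mod_cast hval
    show (lA n v δ (i : ZMod n) k : ℝ) / n + 1 / (2 * n) = _
    rw [hvalR, ← hx]
  · rintro ⟨m, rfl⟩
    constructor
    · refine ⟨fun k => -(((m.val : ℤ) * v k + δ k) / n), (m.val : ℤ), ?_⟩
      funext k
      have hmc : (((m.val : ℤ)) : ZMod n) = m := by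
        push_cast
        simp [ZMod.natCast_val, ZMod.cast_id]
      have hval : ((lA n v δ m k : ℕ) : ℤ) = ((m.val : ℤ) * v k + δ k) % n := by
        unfold lA
        rw [show m * ((v k : ℤ) : ZMod n) + ((δ k : ℤ) : ZMod n)
            = (((m.val : ℤ) * v k + δ k : ℤ) : ZMod n) by push_cast [hmc]; ring]
        rw [ZMod.val_intCast]
      show (lA n v δ m k : ℝ) / n + 1 / (2 * n) = _
      have hemod : ((m.val : ℤ) * v k + δ k) % n
          = -(((m.val : ℤ) * v k + δ k) / n) * n + ((m.val : ℤ) * v k + δ k) := by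
        rw [Int.emod_def]; ring
      have hfin : ((lA n v δ m k : ℕ) : ℝ)
          = (-((((m.val : ℤ)) * v k + δ k) / n) : ℤ) * n
            + (((m.val : ℤ) : ℝ) * (v k : ℝ) + (δ k : ℝ)) := by
        have h9 : ((lA n v δ m k : ℕ) : ℤ)
            = -(((m.val : ℤ) * v k + δ k) / n) * n + (((m.val : ℤ)) * v k + δ k) := by
          rw [hval, hemod]
        exact_mod_cast congrArg (Int.cast : ℤ → ℝ) h9
      rw [hfin]
      push_cast
      field_simp
      try ring
    · intro k
      have h0 : (0:ℝ) ≤ (lA n v δ m k : ℝ) := by positivity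
      have h1 : (lA n v δ m k : ℝ) ≤ (n : ℝ) - 1 := by
        have hlt : (lA n v δ m k : ℕ) + 1 ≤ n := lA_lt n v δ m k
        have h2 : ((lA n v δ m k : ℕ) : ℝ) + 1 ≤ (n : ℝ) := by exact_mod_cast hlt
        linarith
      constructor
      · show 0 ≤ (lA n v δ m k : ℝ) / n + 1 / (2 * n)
        positivity
      · show (lA n v δ m k : ℝ) / n + 1 / (2 * n) ≤ 1
        rw [div_add_div _ _ (by positivity) (by positivity), div_le_one (by positivity)]
        nlinarith

lemma lq_inj (d n : ℕ) [NeZero n] (hd : 0 < d) (v δ : Fin d → ℤ)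
    (hu : ∀ k, IsUnit ((v k : ℤ) : ZMod n)) : Function.Injective (lq n v δ (d := d)) := by
  have hn' : (0 : ℝ) < n := by
    exact_mod_cast Nat.pos_of_ne_zero (NeZero.ne n)
  intro a b hab
  set k0 : Fin d := ⟨0, hd⟩
  have h1 : (lA n v δ a k0 : ℝ) / n + 1 / (2*n) = (lA n v δ b k0 : ℝ) / n + 1 / (2*n) :=
    congrFun hab k0
  have h2 : lA n v δ a k0 = lA n v δ b k0 := by
    have : (lA n v δ a k0 : ℝ) = lA n v δ b k0 := by
      field_simp at h1; linarith
    exact_mod_cast this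
  have h3 : a * ((v k0 : ℤ) : ZMod n) + ((δ k0 : ℤ) : ZMod n)
      = b * ((v k0 : ℤ) : ZMod n) + ((δ k0 : ℤ) : ZMod n) := ZMod.val_injective n h2
  have h4 : a * ((v k0 : ℤ) : ZMod n) = b * ((v k0 : ℤ) : ZMod n) := add_right_cancel h3
  obtain ⟨w, hw⟩ := hu k0
  rw [← hw] at h4
  have := congrArg (· * ((w⁻¹ : (ZMod n)ˣ) : ZMod n)) h4
  simpa [mul_assoc] using this

lemma lhd_nid {d : ℕ} (n : ℕ) [NeZero n] (v δ : Fin d → ℤ) (i j : ZMod n) (k : Fin d) :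
    nid (((lA n v δ i k : ℝ) - lA n v δ j k) / n)
      = ((min (((i - j) * ((v k : ℤ) : ZMod n)).val)
            (n - ((i - j) * ((v k : ℤ) : ZMod n)).val) : ℕ) : ℝ) / n := by
  have hn : 0 < n := Nat.pos_of_ne_zero (NeZero.ne n)
  set r : ℕ := ((i - j) * ((v k : ℤ) : ZMod n)).val with hr
  set b : ℤ := (lA n v δ i k : ℤ) - lA n v δ j k with hb
  have hbl : -((n:ℤ) - 1) ≤ b := by
    have h1 := lA_lt n v δ i k
    have h2 := lA_lt n v δ j k
    rw [hb]; omega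
  have hbu : b ≤ (n:ℤ) - 1 := by
    have h1 := lA_lt n v δ i k
    have h2 := lA_lt n v δ j k
    rw [hb]; omega
  have hrn : r < n := ZMod.val_lt _
  have hdvd : (n : ℤ) ∣ b - r := by
    have h0 : ((b - r : ℤ) : ZMod n) = 0 := by
      push_cast [hb]
      rw [lA_cast, lA_cast]
      rw [show ((r:ℕ) : ZMod n) = (i - j) * ((v k : ℤ) : ZMod n) by
        rw [hr]; simp [ZMod.natCast_val, ZMod.cast_id]]
      ring
    exact (ZMod.intCast_zmod_eq_zero_iff_dvd _ _).mp h0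
  obtain ⟨e, he⟩ := hdvd
  have he1 : e < 1 := by
    by_contra hc
    push_neg at hc
    have : (n:ℤ) * 1 ≤ (n:ℤ) * e := mul_le_mul_of_nonneg_left hc (by positivity)
    omega
  have he2 : -2 < e := by
    by_contra hc
    push_neg at hc
    have : (n:ℤ) * e ≤ (n:ℤ) * (-2) := mul_le_mul_of_nonneg_left hc (by positivity)
    omega
  have hbr : b = r ∨ b = (r : ℤ) - n := by
    interval_cases e <;> omega
  have hbR : ((lA n v δ i k : ℝ) - lA n v δ j k) = (b : ℝ) := by rw [hb]; push_cast; ring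
  have hmin : ((min r (n - r) : ℕ) : ℝ) = min (r : ℝ) ((n:ℝ) - r) := by
    push_cast [Nat.cast_min, Nat.cast_sub (le_of_lt hrn)]
    rfl
  rw [hbR, nid_int_div n hn b (by rw [abs_le]; constructor <;> omega)]
  rcases hbr with h | h
  · rw [h, hmin]
    push_cast
    rw [abs_of_nonneg (by positivity : (0:ℝ) ≤ ((r:ℕ):ℝ))]
  · have hbneg : ((b:ℝ)) = (r:ℝ) - n := by rw [h]; push_cast; ring
    have habs : |(b:ℝ)| = (n:ℝ) - r := by
      rw [hbneg, abs_of_nonpos (by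
        have : (r:ℝ) < n := by exact_mod_cast hrn
        linarith)]
      ring
    rw [habs, hmin, show (n:ℝ) - ((n:ℝ) - r) = (r:ℝ) by ring, min_comm]

lemma lA_add_diff {d : ℕ} (n : ℕ) [NeZero n] (v δ : Fin d → ℤ) (c m : ZMod n) (k : Fin d) :
    lA n v δ (m + c) k = (lA n v δ m k + (c * ((v k : ℤ) : ZMod n)).val) % n := by
  unfold lA
  rw [show (m + c) * ((v k : ℤ) : ZMod n) + ((δ k : ℤ) : ZMod n)
      = (m * ((v k : ℤ) : ZMod n) + ((δ k : ℤ) : ZMod n)) + c * ((v k : ℤ) : ZMod n) by ring,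
    ZMod.val_add]

lemma lhd_D {d : ℕ} (n : ℕ) [NeZero n] (v δ : Fin d → ℤ) (c m : ZMod n) (k : Fin d) :
    (lA n v δ (m + c) k : ℤ) - lA n v δ m k
      = if lA n v δ m k + (c * ((v k : ℤ) : ZMod n)).val < n
        then ((c * ((v k : ℤ) : ZMod n)).val : ℤ)
        else ((c * ((v k : ℤ) : ZMod n)).val : ℤ) - n := by
  have h := lA_add_diff n v δ c m k
  set a := lA n v δ m k
  set r := (c * ((v k : ℤ) : ZMod n)).val
  have ha : a < n := lA_lt n v δ m k
  have hrn : r < n := ZMod.val_lt _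
  split_ifs with hlt
  · rw [h, Nat.mod_eq_of_lt hlt]; push_cast; ring
  · push_neg at hlt
    have h2 : (a + r) % n = a + r - n := by
      rw [Nat.mod_eq_sub_mod hlt, Nat.mod_eq_of_lt (by omega)]
    rw [h, h2]
    push_cast [Nat.cast_sub hlt]
    ring

lemma lhd_good {d : ℕ} (n : ℕ) [NeZero n] (hn2 : 2 ≤ n) (v δ : Fin d → ℤ)
    (hu : ∀ k, IsUnit ((v k : ℤ) : ZMod n)) (c : ZMod n) (k l : Fin d) :
    ∃ m : ZMod n,
      ((lA n v δ (m + c) k : ℤ) - lA n v δ m k).natAbs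
          = min ((c * ((v k : ℤ) : ZMod n)).val) (n - (c * ((v k : ℤ) : ZMod n)).val) ∧
      ((lA n v δ (m + c) l : ℤ) - lA n v δ m l).natAbs
          = min ((c * ((v l : ℤ) : ZMod n)).val) (n - (c * ((v l : ℤ) : ZMod n)).val) := by
  classical
  have key : ∀ k' : Fin d,
      (univ.filter fun m : ZMod n => ((lA n v δ (m + c) k' : ℤ) - lA n v δ m k').natAbs
        ≠ min ((c * ((v k' : ℤ) : ZMod n)).val) (n - (c * ((v k' : ℤ) : ZMod n)).val)).card = 0 ∨
      2 * (univ.filter fun m : ZMod n => ((lA n v δ (m + c) k' : ℤ) - lA n v δ m k').natAbs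
        ≠ min ((c * ((v k' : ℤ) : ZMod n)).val) (n - (c * ((v k' : ℤ) : ZMod n)).val)).card < n := by
    intro k'
    set r := (c * ((v k' : ℤ) : ZMod n)).val with hrdef
    have hrn : r < n := ZMod.val_lt _
    have hD := lhd_D n v δ c (k := k')
    rcases lt_trichotomy (2 * r) n with h3 | h3 | h3
    · right
      have hsub : (univ.filter fun m : ZMod n =>
            ((lA n v δ (m + c) k' : ℤ) - lA n v δ m k').natAbs ≠ min r (n - r))
          ⊆ univ.filter fun m : ZMod n => n - r ≤ lA n v δ m k' := by
        intro m hm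
        simp only [mem_filter, mem_univ, true_and] at hm ⊢
        by_contra hc2
        push_neg at hc2
        apply hm
        rw [hD m, if_pos (by omega)]
        rw [Int.natAbs_natCast]
        omega
      have hcard : (univ.filter fun m : ZMod n => n - r ≤ lA n v δ m k').card = r := by
        have := card_comp_bij (fun m : ZMod n => m * ((v k' : ℤ) : ZMod n) + ((δ k' : ℤ) : ZMod n))
          (bij_aux n _ (hu k') _) (fun a => n - r ≤ a.val)
        rw [show (univ.filter fun m : ZMod n => n - r ≤ lA n v δ m k')
            = (univ.filter fun m : ZMod n =>
              n - r ≤ (m * ((v k' : ℤ) : ZMod n) + ((δ k' : ℤ) : ZMod n)).val) by rfl,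
          this, card_ge_filter]
        omega
      have := Finset.card_le_card hsub
      omega
    · left
      rw [Finset.card_eq_zero, Finset.filter_eq_empty_iff]
      intro m _
      push_neg
      rw [hD m]
      split_ifs with h4
      · rw [Int.natAbs_natCast]; omega
      · rw [show ((r:ℤ) - n) = -((n : ℤ) - r) by ring, Int.natAbs_neg,
          show ((n:ℤ) - r) = ((n - r : ℕ) : ℤ) by push_cast [Nat.cast_sub (le_of_lt hrn)]; ring,
          Int.natAbs_natCast]
        omega
    · right
      have hsub : (univ.filter fun m : ZMod n =>
            ((lA n v δ (m + c) k' : ℤ) - lA n v δ m k').natAbs ≠ min r (n - r))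
          ⊆ univ.filter fun m : ZMod n => lA n v δ m k' < n - r := by
        intro m hm
        simp only [mem_filter, mem_univ, true_and] at hm ⊢
        by_contra hc2
        push_neg at hc2
        apply hm
        rw [hD m, if_neg (by omega)]
        rw [show ((r:ℤ) - n) = -((n : ℤ) - r) by ring, Int.natAbs_neg,
          show ((n:ℤ) - r) = ((n - r : ℕ) : ℤ) by push_cast [Nat.cast_sub (le_of_lt hrn)]; ring,
          Int.natAbs_natCast]
        omega
      have hcard : (univ.filter fun m : ZMod n => lA n v δ m k' < n - r).card = n - r := by
        have := card_comp_bij (fun m : ZMod n => m * ((v k' : ℤ) : ZMod n) + ((δ k' : ℤ) : ZMod n))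
          (bij_aux n _ (hu k') _) (fun a => a.val < n - r)
        rw [show (univ.filter fun m : ZMod n => lA n v δ m k' < n - r)
            = (univ.filter fun m : ZMod n =>
              (m * ((v k' : ℤ) : ZMod n) + ((δ k' : ℤ) : ZMod n)).val < n - r) by rfl,
          this, card_lt_filter n (n - r) (by omega)]
      have := Finset.card_le_card hsub
      omega
  by_contra hcon
  push_neg at hcon
  have hsub : (univ : Finset (ZMod n)) ⊆
      (univ.filter fun m : ZMod n => ((lA n v δ (m + c) k : ℤ) - lA n v δ m k).natAbs
        ≠ min ((c * ((v k : ℤ) : ZMod n)).val) (n - (c * ((v k : ℤ) : ZMod n)).val)) ∪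
      (univ.filter fun m : ZMod n => ((lA n v δ (m + c) l : ℤ) - lA n v δ m l).natAbs
        ≠ min ((c * ((v l : ℤ) : ZMod n)).val) (n - (c * ((v l : ℤ) : ZMod n)).val)) := by
    intro m _
    rcases eq_or_ne (((lA n v δ (m + c) k : ℤ) - lA n v δ m k).natAbs)
        (min ((c * ((v k : ℤ) : ZMod n)).val) (n - (c * ((v k : ℤ) : ZMod n)).val)) with h | h
    · exact Finset.mem_union_right _ (by simp [hcon m h])
    · exact Finset.mem_union_left _ (by simp [h])
  have h1 := Finset.card_le_card hsub
  have h2 := Finset.card_union_le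
    (univ.filter fun m : ZMod n => ((lA n v δ (m + c) k : ℤ) - lA n v δ m k).natAbs
      ≠ min ((c * ((v k : ℤ) : ZMod n)).val) (n - (c * ((v k : ℤ) : ZMod n)).val))
    (univ.filter fun m : ZMod n => ((lA n v δ (m + c) l : ℤ) - lA n v δ m l).natAbs
      ≠ min ((c * ((v l : ℤ) : ZMod n)).val) (n - (c * ((v l : ℤ) : ZMod n)).val))
  rw [Finset.card_univ, ZMod.card] at h1
  have hk := key k
  have hl := key l
  omega

/-- for every pair of coordinates k < l, the bivariate projection of
L(n,v,δ) has equal Euclidean and wrap-around separation distances; consequently the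
criteria c_WS2 and c_RS2 coincide on L(n,v,δ). -/
theorem stmt_12 (d n : ℕ) (hd : 2 ≤ d) (hn : 2 ≤ n) (v δ : Fin d → ℤ)
    (hco : ∀ k, IsCoprime (v k) (n : ℤ))
    (S : Set (Fin d → ℝ)) (hS : S = LHDset d n v (fun k => (δ k : ℝ)))
    (minE minW : Fin d → Fin d → ℝ)
    (hminE : ∀ k l, minE k l = sInf {r : ℝ | ∃ x ∈ S, ∃ y ∈ S, x ≠ y ∧
        r = Real.sqrt ((x k - y k) ^ 2 + (x l - y l) ^ 2)})
    (hminW : ∀ k l, minW k l = sInf {r : ℝ | ∃ x ∈ S, ∃ y ∈ S, x ≠ y ∧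
        r = wdist ![x k - y k, x l - y l]}) :
    (∀ k l : Fin d, k < l → minE k l = minW k l) ∧
    ∑ p ∈ Finset.univ.filter (fun p : Fin d × Fin d => p.1 < p.2), (minW p.1 p.2)⁻¹
      = ∑ p ∈ Finset.univ.filter (fun p : Fin d × Fin d => p.1 < p.2), (minE p.1 p.2)⁻¹ := by
  haveI : NeZero n := ⟨by omega⟩
  haveI : Fact (1 < n) := ⟨by omega⟩
  have hn' : (0 : ℝ) < n := by exact_mod_cast (by omega : 0 < n)
  have hu : ∀ k, IsUnit ((v k : ℤ) : ZMod n) := fun k => unit_aux n (v k) (hco k)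
  have hSq : S = Set.range (lq n v δ) := by rw [hS, lhd_S_eq]
  have hinj : Function.Injective (lq n v δ (d := d)) := lq_inj d n (by omega) v δ hu
  have hmem : ∀ m : ZMod n, lq n v δ m ∈ S := fun m => hSq ▸ ⟨m, rfl⟩
  have hne10 : lq n v δ (1 : ZMod n) ≠ lq n v δ 0 := fun h => one_ne_zero (hinj h)
  have hwle : ∀ u0 u1 : ℝ, wdist ![u0, u1] ≤ Real.sqrt (u0 ^ 2 + u1 ^ 2) := by
    intro u0 u1
    unfold wdist
    apply Real.sqrt_le_sqrt
    rw [Fin.sum_univ_two]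
    simp only [Matrix.cons_val_zero, Matrix.cons_val_one, Matrix.head_cons]
    have h0 : ∀ u : ℝ, nid u ^ 2 ≤ u ^ 2 := fun u => by
      nlinarith [nid_le_abs u, nid_nonneg u, sq_abs u, abs_nonneg u]
    linarith [h0 u0, h0 u1]
  have hdq : ∀ (i j : ZMod n) (k : Fin d), lq n v δ i k - lq n v δ j k
      = ((lA n v δ i k : ℝ) - lA n v δ j k) / n := by
    intro i j k
    unfold lq
    field_simp
    ring
  have key : ∀ k l : Fin d, minE k l = minW k l := by
    intro k l
    rw [hminE, hminW]
    have hEne : {r : ℝ | ∃ x ∈ S, ∃ y ∈ S, x ≠ y ∧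
        r = Real.sqrt ((x k - y k) ^ 2 + (x l - y l) ^ 2)}.Nonempty :=
      ⟨_, lq n v δ 1, hmem 1, lq n v δ 0, hmem 0, hne10, rfl⟩
    have hWne : {r : ℝ | ∃ x ∈ S, ∃ y ∈ S, x ≠ y ∧
        r = wdist ![x k - y k, x l - y l]}.Nonempty :=
      ⟨_, lq n v δ 1, hmem 1, lq n v δ 0, hmem 0, hne10, rfl⟩
    have hEbdd : BddBelow {r : ℝ | ∃ x ∈ S, ∃ y ∈ S, x ≠ y ∧
        r = Real.sqrt ((x k - y k) ^ 2 + (x l - y l) ^ 2)} := by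
      refine ⟨0, ?_⟩
      rintro r ⟨x, hx, y, hy, hxy, rfl⟩
      exact Real.sqrt_nonneg _
    have hWbdd : BddBelow {r : ℝ | ∃ x ∈ S, ∃ y ∈ S, x ≠ y ∧
        r = wdist ![x k - y k, x l - y l]} := by
      refine ⟨0, ?_⟩
      rintro r ⟨x, hx, y, hy, hxy, rfl⟩
      exact Real.sqrt_nonneg _
    -- the wrap-around value of a pair equals an explicit formula
    have hwval : ∀ i j : ZMod n,
        wdist ![lq n v δ i k - lq n v δ j k, lq n v δ i l - lq n v δ j l]
        = Real.sqrt
          ((((min (((i - j) * ((v k : ℤ) : ZMod n)).val)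
              (n - ((i - j) * ((v k : ℤ) : ZMod n)).val) : ℕ) : ℝ) / n) ^ 2
          + (((min (((i - j) * ((v l : ℤ) : ZMod n)).val)
              (n - ((i - j) * ((v l : ℤ) : ZMod n)).val) : ℕ) : ℝ) / n) ^ 2) := by
      intro i j
      unfold wdist
      rw [Fin.sum_univ_two]
      simp only [Matrix.cons_val_zero, Matrix.cons_val_one, Matrix.head_cons]
      rw [hdq, hdq, lhd_nid, lhd_nid]
    -- every wrap-around value is attained as a Euclidean value
    have main : ∀ r ∈ {r : ℝ | ∃ x ∈ S, ∃ y ∈ S, x ≠ y ∧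
        r = wdist ![x k - y k, x l - y l]},
        r ∈ {r : ℝ | ∃ x ∈ S, ∃ y ∈ S, x ≠ y ∧
        r = Real.sqrt ((x k - y k) ^ 2 + (x l - y l) ^ 2)} := by
      rintro r ⟨x, hx, y, hy, hne, rfl⟩
      rw [hSq] at hx hy
      obtain ⟨i, rfl⟩ := hx
      obtain ⟨j, rfl⟩ := hy
      obtain ⟨m, hmk, hml⟩ := lhd_good n hn v δ hu (i - j) k l
      have hmne : m + (i - j) ≠ m := by
        intro h
        have : i - j = 0 := by simpa using congrArg (· - m) h
        exact hne (by rw [sub_eq_zero] at this; rw [this])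
      refine ⟨lq n v δ (m + (i - j)), hmem _, lq n v δ m, hmem _,
        fun h => hmne (hinj h), ?_⟩
      rw [hwval i j, hdq, hdq]
      have cast1 : ((lA n v δ (m + (i - j)) k : ℝ) - lA n v δ m k)
          = (((lA n v δ (m + (i - j)) k : ℤ) - lA n v δ m k : ℤ) : ℝ) := by push_cast; ring
      have cast2 : ((lA n v δ (m + (i - j)) l : ℝ) - lA n v δ m l)
          = (((lA n v δ (m + (i - j)) l : ℤ) - lA n v δ m l : ℤ) : ℝ) := by push_cast; ring
      have e1 : (((min (((i - j) * ((v k : ℤ) : ZMod n)).val)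
              (n - ((i - j) * ((v k : ℤ) : ZMod n)).val) : ℕ) : ℝ)) ^ 2
          = ((lA n v δ (m + (i - j)) k : ℝ) - lA n v δ m k) ^ 2 := by
        rw [cast1, ← hmk, Nat.cast_natAbs, Int.cast_abs, sq_abs]
      have e2 : (((min (((i - j) * ((v l : ℤ) : ZMod n)).val)
              (n - ((i - j) * ((v l : ℤ) : ZMod n)).val) : ℕ) : ℝ)) ^ 2
          = ((lA n v δ (m + (i - j)) l : ℝ) - lA n v δ m l) ^ 2 := by
        rw [cast2, ← hml, Nat.cast_natAbs, Int.cast_abs, sq_abs]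
      rw [div_pow, div_pow, div_pow, div_pow, e1, e2]
    have h1 : sInf {r : ℝ | ∃ x ∈ S, ∃ y ∈ S, x ≠ y ∧
        r = wdist ![x k - y k, x l - y l]}
        ≤ sInf {r : ℝ | ∃ x ∈ S, ∃ y ∈ S, x ≠ y ∧
        r = Real.sqrt ((x k - y k) ^ 2 + (x l - y l) ^ 2)} := by
      refine le_csInf hEne ?_
      rintro r ⟨x, hx, y, hy, hne, rfl⟩
      exact (csInf_le hWbdd ⟨x, hx, y, hy, hne, rfl⟩).trans (hwle _ _)
    have h2 : sInf {r : ℝ | ∃ x ∈ S, ∃ y ∈ S, x ≠ y ∧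
        r = Real.sqrt ((x k - y k) ^ 2 + (x l - y l) ^ 2)}
        ≤ sInf {r : ℝ | ∃ x ∈ S, ∃ y ∈ S, x ≠ y ∧
        r = wdist ![x k - y k, x l - y l]} :=
      le_csInf hWne fun r hr => csInf_le hEbdd (main r hr)
    exact le_antisymm h2 h1
  refine ⟨fun k l _ => key k l, ?_⟩
  exact Finset.sum_congr rfl fun p _ => by rw [key p.1 p.2]
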